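/- Let (x, f, y) be a feasible solution to LP-k-DST* on a D-shallow instance (D ≥ 2), and define the embedded solution on the path-suffix tree 𝒢 by x̂_{{p, p+e}} = y_{p+e}. Then the total cost satisfies Σ_{e' ∈ E(𝒢)} c_{e'} x̂_{e'} ≤ k^{D−2} · Σ_{e ∈ E(G)} c_e x_e. -/

import Mathlib

open scoped Classical

/-- The list of directed edges traversed by a list of vertices. -/
def pathEdges {V : Type*} (p : List V) : List (V × V) := p.zip p.tail

/-- `p` is a simple directed path in the edge set `E` starting at `s`. -/
def IsRPath {V : Type*} (E : Finset (V × V)) (s : V) (p : List V) : Prop :=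
  p.Nodup ∧ p.Chain' (fun u v => (u, v) ∈ E) ∧ p.head? = some s

/-- `p` is a simple directed path in `E` from `s` to `t`. -/
def IsRPathTo {V : Type*} (E : Finset (V × V)) (s t : V) (p : List V) : Prop :=
  IsRPath E s p ∧ p.getLast? = some t

/-- `E` contains `k` pairwise edge-disjoint directed `s`→`t` paths. -/
def HasKPaths {V : Type*} (E : Finset (V × V)) (s t : V) (k : ℕ) : Prop :=
  ∃ P : Fin k → List V, (∀ i, IsRPathTo E s t (P i)) ∧
    ∀ i j, i ≠ j → ∀ e, e ∈ pathEdges (P i) → e ∉ pathEdges (P j)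

/-- In-degree of a vertex `v` in the edge set `E`. -/
def inDeg {V : Type*} [DecidableEq V] (E : Finset (V × V)) (v : V) : ℕ :=
  (E.filter (fun e => e.2 = v)).card

/-- In-degree of a vertex set `S`: number of edges entering `S` from outside. -/
def inDegS {V : Type*} [DecidableEq V] (E : Finset (V × V)) (S : Finset V) : ℕ :=
  (E.filter (fun e => e.1 ∉ S ∧ e.2 ∈ S)).card

/-- The maximum number of pairwise edge-disjoint `s→v` paths in `E`. -/
noncomputable def maxConn {V : Type*} (E : Finset (V × V)) (s v : V) : ℕ :=
  sSup {m : ℕ | HasKPaths E s v m}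

/-- The cost of the last edge of a vertex list (0 for lists with at most one vertex). -/
def lastEdgeCost {V : Type*} (c : V × V → ℝ) (p : List V) : ℝ :=
  ((pathEdges p).getLast?.map c).getD 0

lemma chain'_mem_pathEdges {V : Type*} {R : V → V → Prop} :
    ∀ {p : List V}, p.Chain' R → ∀ e ∈ pathEdges p, R e.1 e.2
  | [], _, e, he => by simp [pathEdges] at he
  | [a], _, e, he => by simp [pathEdges] at he
  | a :: b :: m, h, e, he => by
    replace h := List.isChain_cons_cons.1 h
    simp only [pathEdges, List.tail_cons, List.zip_cons_cons, List.mem_cons] at he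
    rcases he with rfl | he
    · exact h.1
    · exact chain'_mem_pathEdges h.2 e he

lemma pathEdges_ne_nil {V : Type*} {p : List V} (h : 2 ≤ p.length) :
    pathEdges p ≠ [] := by
  match p with
  | [] => simp at h
  | [a] => simp at h
  | a :: b :: m => simp [pathEdges]

lemma length_ge_two_of_pathEdges {V : Type*} {p : List V} {e : V × V}
    (h : (pathEdges p).getLast? = some e) : 2 ≤ p.length := by
  match p with
  | [] => simp [pathEdges] at h
  | [a] => simp [pathEdges] at h
  | a :: b :: m => simp [List.length]

/-- Cost of the tree embedding: if `(x, f, y)` satisfies the Aggregating-`k`-Flow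
constraints of LP-k-DST* on a `D`-shallow instance (`D ≥ 2`), then the total cost of
the embedded solution `x̂` on the path-suffix tree (each tree edge `{p, p+e}` has
capacity `y_{p+e}` and cost `c_e`) is at most `k^(D−2)` times the LP cost `Σ c_e x_e`. -/
theorem embedded_tree_cost_le
    {V : Type*} [Fintype V] [DecidableEq V]
    (E : Finset (V × V)) (r : V) (c x : V × V → ℝ) (y : List V → ℝ)
    (k D : ℕ) (hk : 1 ≤ k) (hD : 2 ≤ D)
    (hc : ∀ e, 0 ≤ c e) (hy : ∀ p, 0 ≤ y p)
    (hagg : ∀ e ∈ E, ∀ ℓ : ℕ, 1 ≤ ℓ → ℓ ≤ D →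
      ∑ᶠ p ∈ {p : List V |
          IsRPath E r p ∧ p.length ≤ ℓ + 1 ∧ (pathEdges p).getLast? = some e}, y p
        ≤ max 1 ((k : ℝ) ^ (ℓ - 2)) * x e) :
    ∑ᶠ p ∈ {p : List V | IsRPath E r p ∧ 2 ≤ p.length ∧ p.length ≤ D + 1},
        lastEdgeCost c p * y p
      ≤ (k : ℝ) ^ (D - 2) * ∑ e ∈ E, c e * x e := by
  set S : V × V → Set (List V) := fun e =>
    {p : List V | IsRPath E r p ∧ p.length ≤ D + 1 ∧ (pathEdges p).getLast? = some e}
    with hS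
  have hSfin : ∀ e, (S e).Finite := fun e =>
    (List.finite_length_le V (D + 1)).subset (fun p hp => hp.2.1)
  have hunion : {p : List V | IsRPath E r p ∧ 2 ≤ p.length ∧ p.length ≤ D + 1}
      = ⋃ e ∈ (↑E : Set (V × V)), S e := by
    ext p
    simp only [Set.mem_setOf_eq, Set.mem_iUnion, hS, Finset.mem_coe]
    constructor
    · rintro ⟨hp, h2, hle⟩
      have hne := pathEdges_ne_nil h2
      refine ⟨(pathEdges p).getLast hne,
        chain'_mem_pathEdges hp.2.1 _ (List.getLast_mem hne), hp, hle, ?_⟩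
      exact List.getLast?_eq_getLast hne
    · rintro ⟨e, heE, hp, hle, hlast⟩
      exact ⟨hp, length_ge_two_of_pathEdges hlast, hle⟩
  have hdisj : (↑E : Set (V × V)).PairwiseDisjoint S := by
    intro e he e' he' hne
    refine Set.disjoint_left.2 fun p hp hp' => hne ?_
    have := hp.2.2.symm.trans hp'.2.2
    exact Option.some_injective _ this
  rw [hunion, finsum_mem_biUnion hdisj E.finite_toSet (fun e _ => hSfin e),
    finsum_mem_coe_finset]
  have hK1 : (1 : ℝ) ≤ (k : ℝ) ^ (D - 2) := by
    apply one_le_pow₀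
    exact_mod_cast hk
  calc ∑ e ∈ E, ∑ᶠ p ∈ S e, lastEdgeCost c p * y p
      ≤ ∑ e ∈ E, c e * ((k : ℝ) ^ (D - 2) * x e) := by
        apply Finset.sum_le_sum
        intro e heE
        have hcongr : ∑ᶠ p ∈ S e, lastEdgeCost c p * y p = ∑ᶠ p ∈ S e, c e * y p := by
          apply finsum_mem_congr rfl
          intro p hp
          have : lastEdgeCost c p = c e := by
            simp [lastEdgeCost, hp.2.2]
          rw [this]
        rw [hcongr, ← Set.Finite.coe_toFinset (hSfin e), finsum_mem_coe_finset,
          ← Finset.mul_sum]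
        have hsum : ∑ᶠ p ∈ S e, y p ≤ max 1 ((k:ℝ) ^ (D - 2)) * x e := hagg e heE D (by omega) le_rfl
        rw [max_eq_right hK1] at hsum
        rw [← Set.Finite.coe_toFinset (hSfin e), finsum_mem_coe_finset] at hsum
        exact mul_le_mul_of_nonneg_left hsum (hc e)
    _ = (k : ℝ) ^ (D - 2) * ∑ e ∈ E, c e * x e := by
        rw [Finset.mul_sum]; apply Finset.sum_congr rfl; intros; ring
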